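/- Let λ = (√2/2)(1 + i) and c = i/(√2 (1 + i)). Then for every φ ∈ 𝓢(ℝ,ℂ) and every x ∈ ℝ: c ∫_ℝ (φ(x - s) + i φ''(x - s)) e^{-λ |s|} ds = φ(x). (That is, T(T⁻¹ φ) = φ on 𝓢(ℝ,ℂ), where T⁻¹ φ = φ + i φ'' and T is convolution with the Green's function c e^{-λ|·|}.) -/

import Mathlib

open MeasureTheory Filter Set Topology

private lemma schwartz_bound (φ : SchwartzMap ℝ ℂ) : ∃ C, 0 ≤ C ∧ ∀ y, ‖φ y‖ ≤ C := by
  obtain ⟨C, hC⟩ := φ.decay 0 0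
  exact ⟨C, hC.1.le, fun y => by simpa using hC.2 y⟩

/-- `T (T⁻¹ φ) = φ` on `𝓢(ℝ)` in the second example: with `λ = (√2/2)(1+i)` and
`c = i/(√2(1+i))`, `T⁻¹ φ = φ + i φ''` and `T` is convolution with `c e^{-λ|·|}`, so
`c ∫ (φ(x-s) + i φ''(x-s)) e^{-λ|s|} ds = φ(x)`. -/
theorem statement16 (l c : ℂ)
    (hl : l = (Real.sqrt 2 / 2 : ℝ) * (1 + Complex.I))
    (hc : c = Complex.I / ((Real.sqrt 2 : ℝ) * (1 + Complex.I))) :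
    ∀ (φ : SchwartzMap ℝ ℂ) (x : ℝ),
      c * ∫ s : ℝ, (φ (x - s) + Complex.I * deriv (deriv (⇑φ)) (x - s))
          * Complex.exp (-l * ((|s| : ℝ) : ℂ)) = φ x := by
  intro φ x
  have hr0 : (0 : ℝ) < Real.sqrt 2 := Real.sqrt_pos.2 (by norm_num)
  have hr2 : (Real.sqrt 2 : ℝ) * Real.sqrt 2 = 2 := Real.mul_self_sqrt (by norm_num)
  -- λ² = i
  have hll : l * l = Complex.I := by
    rw [hl]
    have : ((Real.sqrt 2 : ℝ) : ℂ) * ((Real.sqrt 2 : ℝ) : ℂ) = 2 := by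
      norm_cast
    push_cast
    linear_combination ((1 + Complex.I)^2 / 4) * this + (1/2 : ℂ) * Complex.I_sq
  have hlre : l.re = Real.sqrt 2 / 2 := by
    rw [hl]; simp
  have hlre_pos : 0 < l.re := by rw [hlre]; positivity
  -- derivatives as Schwartz maps
  set ψ : SchwartzMap ℝ ℂ := SchwartzMap.derivCLM ℝ ℂ φ with hψdef
  set ψ2 : SchwartzMap ℝ ℂ := SchwartzMap.derivCLM ℝ ℂ ψ with hψ2def
  have hψ : ⇑ψ = deriv ⇑φ := funext fun y => SchwartzMap.derivCLM_apply ℝ φ y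
  have hψ2 : ⇑ψ2 = deriv (deriv ⇑φ) := by
    have : ⇑ψ2 = deriv ⇑ψ := funext fun y => SchwartzMap.derivCLM_apply ℝ ψ y
    rw [this, hψ]
  rw [show (fun s : ℝ => (φ (x - s) + Complex.I * deriv (deriv (⇑φ)) (x - s))
        * Complex.exp (-l * ((|s| : ℝ) : ℂ)))
      = fun s : ℝ => (φ (x - s) + Complex.I * ψ2 (x - s))
        * Complex.exp (-l * ((|s| : ℝ) : ℂ)) by rw [hψ2]]
  -- integrability of the full integrand
  have hbase : Integrable (fun s : ℝ => φ (x - s) + Complex.I * ψ2 (x - s)) := by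
    exact ((MeasureTheory.integrable_comp_sub_left (⇑φ) x).2 φ.integrable).add
      (((MeasureTheory.integrable_comp_sub_left (⇑ψ2) x).2 ψ2.integrable).const_mul _)
  have hexp_norm : ∀ z : ℂ, ‖Complex.exp z‖ = Real.exp z.re := fun z => Complex.norm_exp z
  have hg : Integrable (fun s : ℝ => (φ (x - s) + Complex.I * ψ2 (x - s))
      * Complex.exp (-l * ((|s| : ℝ) : ℂ))) := by
    have hcont : Continuous (fun s : ℝ => Complex.exp (-l * ((|s| : ℝ) : ℂ))) := by
      exact Complex.continuous_exp.comp (continuous_const.mul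
        (Complex.continuous_ofReal.comp (continuous_abs)))
    have := hbase.bdd_mul hcont.aestronglyMeasurable (c := 1) (Filter.Eventually.of_forall fun s => by
      rw [hexp_norm]
      have : (-l * ((|s| : ℝ) : ℂ)).re = -(l.re * |s|) := by
        simp [Complex.mul_re]
      rw [this]
      exact Real.exp_le_one_iff.2 (neg_nonpos.2 (mul_nonneg hlre_pos.le (abs_nonneg s))))
    exact this.congr (Filter.Eventually.of_forall fun s => mul_comm _ _)
  -- split the integral
  rw [← intervalIntegral.integral_Iic_add_Ioi (b := (0:ℝ)) hg.integrableOn hg.integrableOn]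
  -- pointwise derivative facts
  have hφd : ∀ s : ℝ, HasDerivAt (fun s : ℝ => φ (x - s)) (-ψ (x - s)) s := by
    intro s
    have := HasDerivAt.comp_const_sub x s (φ.differentiableAt.hasDerivAt)
    rwa [hψ]
  have hψd : ∀ s : ℝ, HasDerivAt (fun s : ℝ => ψ (x - s)) (-ψ2 (x - s)) s := by
    intro s
    have := HasDerivAt.comp_const_sub x s (ψ.differentiableAt.hasDerivAt)
    rwa [show ⇑ψ2 = deriv ⇑ψ from funext fun y => SchwartzMap.derivCLM_apply ℝ ψ y]
  have hexpd : ∀ (a : ℂ) (s : ℝ), HasDerivAt (fun s : ℝ => Complex.exp (a * s))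
      (Complex.exp (a * s) * a) s := by
    intro a s
    have h1 : HasDerivAt (fun s : ℝ => ((s : ℂ))) 1 s := Complex.ofRealCLM.hasDerivAt
    simpa using (h1.const_mul a).cexp
  -- the two primitives
  set H : ℝ → ℂ := fun s => Complex.exp (-l * s) *
    (Complex.I * l * φ (x - s) - Complex.I * ψ (x - s)) with hHdef
  set K : ℝ → ℂ := fun s => Complex.exp (l * s) *
    (-(Complex.I * l) * φ (x - s) - Complex.I * ψ (x - s)) with hKdef
  have hH : ∀ s : ℝ, HasDerivAt H
      ((φ (x - s) + Complex.I * ψ2 (x - s)) * Complex.exp (-l * s)) s := by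
    intro s
    have h := (hexpd (-l) s).mul
      (((hφd s).const_mul (Complex.I * l)).sub ((hψd s).const_mul Complex.I))
    have heq : Complex.exp (-l * s) * -l * (Complex.I * l * φ (x - s) - Complex.I * ψ (x - s))
        + Complex.exp (-l * s) * (Complex.I * l * -ψ (x - s) - Complex.I * -ψ2 (x - s))
        = (φ (x - s) + Complex.I * ψ2 (x - s)) * Complex.exp (-l * s) := by
      linear_combination (-Complex.I * Complex.exp (-l * s) * φ (x - s)) * hll + (-(Complex.exp (-l * s)) * φ (x - s)) * Complex.I_sq
    rw [← heq]
    exact h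
  have hK : ∀ s : ℝ, HasDerivAt K
      ((φ (x - s) + Complex.I * ψ2 (x - s)) * Complex.exp (l * s)) s := by
    intro s
    have h := (hexpd l s).mul
      (((hφd s).const_mul (-(Complex.I * l))).sub ((hψd s).const_mul Complex.I))
    have heq : Complex.exp (l * s) * l * (-(Complex.I * l) * φ (x - s) - Complex.I * ψ (x - s))
        + Complex.exp (l * s) * (-(Complex.I * l) * -ψ (x - s) - Complex.I * -ψ2 (x - s))
        = (φ (x - s) + Complex.I * ψ2 (x - s)) * Complex.exp (l * s) := by
      linear_combination (-Complex.I * Complex.exp (l * s) * φ (x - s)) * hll + (-(Complex.exp (l * s)) * φ (x - s)) * Complex.I_sq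
    rw [← heq]
    exact h
  -- bounds for the tendsto arguments
  obtain ⟨C1, hC1nn, hC1⟩ := schwartz_bound φ
  obtain ⟨C2, hC2nn, hC2⟩ := schwartz_bound ψ
  set C : ℝ := ‖l‖ * C1 + C2 with hCdef
  have hbound : ∀ s : ℝ, ∀ a : ℂ,
      ‖Complex.I * a * φ (x - s) - Complex.I * ψ (x - s)‖ ≤ ‖a‖ * C1 + C2 := by
    intro s a
    calc ‖Complex.I * a * φ (x - s) - Complex.I * ψ (x - s)‖
        ≤ ‖Complex.I * a * φ (x - s)‖ + ‖Complex.I * ψ (x - s)‖ := norm_sub_le _ _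
      _ ≤ ‖a‖ * C1 + C2 := by
          rw [norm_mul, norm_mul, norm_mul, Complex.norm_I, one_mul, one_mul]
          exact add_le_add (mul_le_mul_of_nonneg_left (hC1 _) (norm_nonneg a))
            (hC2 _)
  have hexp_decay : Tendsto (fun s : ℝ => Real.exp (-(l.re * s)) * C) atTop (𝓝 0) := by
    have h1 : Tendsto (fun s : ℝ => l.re * s) atTop atTop :=
      Tendsto.const_mul_atTop hlre_pos tendsto_id
    have h2 : Tendsto (fun s : ℝ => Real.exp (-(l.re * s))) atTop (𝓝 0) :=
      Real.tendsto_exp_neg_atTop_nhds_zero.comp h1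
    simpa using h2.mul_const C
  have hHtend : Tendsto H atTop (𝓝 0) := by
    apply squeeze_zero_norm _ hexp_decay
    intro s
    rw [hHdef]
    simp only []
    rw [norm_mul, hexp_norm]
    have hre : (-l * (s : ℂ)).re = -(l.re * s) := by simp [Complex.mul_re]
    rw [hre]
    exact mul_le_mul_of_nonneg_left (by simpa using hbound s l) (Real.exp_nonneg _)
  have hKtend : Tendsto K atBot (𝓝 0) := by
    apply squeeze_zero_norm _ (show Tendsto (fun s : ℝ => Real.exp (l.re * s) * C) atBot (𝓝 0) by
      have h1 : Tendsto (fun s : ℝ => l.re * s) atBot atBot :=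
        Tendsto.const_mul_atBot hlre_pos tendsto_id
      have h2 : Tendsto (fun s : ℝ => Real.exp (l.re * s)) atBot (𝓝 0) :=
        Real.tendsto_exp_atBot.comp h1
      simpa using h2.mul_const C)
    intro s
    rw [hKdef]
    simp only []
    rw [norm_mul, hexp_norm]
    have hre : (l * (s : ℂ)).re = l.re * s := by simp [Complex.mul_re]
    rw [hre]
    refine mul_le_mul_of_nonneg_left ?_ (Real.exp_nonneg _)
    have := hbound s (-l)
    simp only [norm_neg] at this
    calc ‖-(Complex.I * l) * φ (x - s) - Complex.I * ψ (x - s)‖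
        = ‖Complex.I * (-l) * φ (x - s) - Complex.I * ψ (x - s)‖ := by ring_nf
      _ ≤ ‖l‖ * C1 + C2 := this
  -- integrability on half-lines of the "unfolded" integrands
  have hIntIoi : IntegrableOn (fun s : ℝ => (φ (x - s) + Complex.I * ψ2 (x - s))
      * Complex.exp (-l * s)) (Ioi (0:ℝ)) := by
    refine (hg.integrableOn).congr_fun (fun s hs => ?_) measurableSet_Ioi
    beta_reduce
    rw [abs_of_pos (show (0:ℝ) < s from hs)]
  have hIntIic : IntegrableOn (fun s : ℝ => (φ (x - s) + Complex.I * ψ2 (x - s))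
      * Complex.exp (l * s)) (Iic (0:ℝ)) := by
    refine (hg.integrableOn).congr_fun (fun s hs => ?_) measurableSet_Iic
    beta_reduce
    rw [abs_of_nonpos (show s ≤ (0:ℝ) from hs)]
    push_cast
    ring_nf
  -- FTC on the two half-lines
  have hIoi : ∫ s in Ioi (0:ℝ), (φ (x - s) + Complex.I * ψ2 (x - s))
      * Complex.exp (-l * ((|s| : ℝ) : ℂ)) = 0 - H 0 := by
    rw [setIntegral_congr_fun measurableSet_Ioi
      (show EqOn _ (fun s : ℝ => (φ (x - s) + Complex.I * ψ2 (x - s)) * Complex.exp (-l * s)) _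
        from fun s hs => by simp only []; rw [abs_of_pos hs])]
    exact integral_Ioi_of_hasDerivAt_of_tendsto
      (hH 0).continuousAt.continuousWithinAt (fun s _ => hH s) hIntIoi hHtend
  have hIic : ∫ s in Iic (0:ℝ), (φ (x - s) + Complex.I * ψ2 (x - s))
      * Complex.exp (-l * ((|s| : ℝ) : ℂ)) = K 0 - 0 := by
    rw [setIntegral_congr_fun measurableSet_Iic
      (show EqOn _ (fun s : ℝ => (φ (x - s) + Complex.I * ψ2 (x - s)) * Complex.exp (l * s)) _
        from fun s hs => by
          simp only []
          rw [abs_of_nonpos hs]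
          push_cast
          ring_nf)]
    exact integral_Iic_of_hasDerivAt_of_tendsto
      (hK 0).continuousAt.continuousWithinAt (fun s _ => hK s) hIntIic hKtend
  rw [hIoi, hIic]
  have hH0 : H 0 = Complex.I * l * φ x - Complex.I * ψ x := by
    rw [hHdef]; simp
  have hK0 : K 0 = -(Complex.I * l) * φ x - Complex.I * ψ x := by
    rw [hKdef]; simp
  rw [hH0, hK0]
  -- final algebra: c * (-2 i l) = 1
  have hne : ((Real.sqrt 2 : ℝ) : ℂ) * (1 + Complex.I) ≠ 0 := by
    apply mul_ne_zero
    · exact_mod_cast hr0.ne'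
    · intro h
      have := congrArg Complex.re h
      simp at this
  have hcl : c * (-(2 * Complex.I * l)) = 1 := by
    rw [hc, hl, div_mul_eq_mul_div, div_eq_one_iff_eq hne]
    push_cast
    linear_combination (-((Real.sqrt 2 : ℝ) : ℂ) * (1 + Complex.I)) * Complex.I_sq
  linear_combination (φ x) * hcl
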